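/- Let r be a positive integer, a_{k₁,k₂} real constants for k₁ + k₂ ≤ 2r, and β ≠ 0 a real number. Let ξ₁, ξ₂ : ℝ → ℝ be 2r-times continuously differentiable and define φ(x₁, x₂) = ξ₁(x₁) cos(β x₂) + ξ₂(x₁) sin(β x₂). Then (L φ)(x₁, x₂) = 0 for all real x₁, x₂ if and only if the coupled ordinary differential system (L₁₁ ξ₁)(x₁) + (L₁₂ ξ₂)(x₁) = 0 and (L₂₁ ξ₁)(x₁) + (L₂₂ ξ₂)(x₁) = 0 holds for all real x₁, where (L₁₁ ξ)(x₁) = (L₂₂ ξ)(x₁) = Σ_{k₁ + 2k₂ ≤ 2r} a_{k₁,2k₂} (−1)^{k₂} β^{2k₂} ξ^{(k₁)}(x₁), (L₁₂ ξ)(x₁) = Σ_{k₁ + 2k₂ + 1 ≤ 2r} a_{k₁,2k₂+1} (−1)^{k₂} β^{2k₂+1} ξ^{(k₁)}(x₁), and (L₂₁ ξ)(x₁) = −(L₁₂ ξ)(x₁). -/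

import Mathlib

open Finset

/-- Mixed partial derivative of order `k₁` in the first variable and `k₂` in the second
variable of a curried two-variable function `v : ℝ → ℝ → ℝ`. -/
noncomputable def mixedPartial (k₁ k₂ : ℕ) (v : ℝ → ℝ → ℝ) (x₁ x₂ : ℝ) : ℝ :=
  iteratedDeriv k₁ (fun y₁ => iteratedDeriv k₂ (fun y₂ => v y₁ y₂) x₂) x₁

/-- The `2r`-th order constant-coefficient partial differential operator
`(L v)(x₁,x₂) = Σ_{k₁+k₂≤2r} a_{k₁,k₂} v^{(k₁,k₂)}(x₁,x₂)`. -/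
noncomputable def Lop (r : ℕ) (a : ℕ → ℕ → ℝ) (v : ℝ → ℝ → ℝ) (x₁ x₂ : ℝ) : ℝ :=
  ∑ p ∈ (range (2 * r + 1) ×ˢ range (2 * r + 1)).filter (fun p => p.1 + p.2 ≤ 2 * r),
    a p.1 p.2 * mixedPartial p.1 p.2 v x₁ x₂

/-- `(L₁₁ ξ)(x₁) = (L₂₂ ξ)(x₁) = Σ_{k₁+2k₂≤2r} a_{k₁,2k₂} (−1)^{k₂} β^{2k₂} ξ^{(k₁)}(x₁)`. -/
noncomputable def L11 (r : ℕ) (a : ℕ → ℕ → ℝ) (β : ℝ) (ξ : ℝ → ℝ) (x₁ : ℝ) : ℝ :=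
  ∑ p ∈ (range (2 * r + 1) ×ˢ range (2 * r + 1)).filter (fun p => p.1 + 2 * p.2 ≤ 2 * r),
    a p.1 (2 * p.2) * (-1 : ℝ) ^ p.2 * β ^ (2 * p.2) * iteratedDeriv p.1 ξ x₁

/-- `(L₁₂ ξ)(x₁) = Σ_{k₁+2k₂+1≤2r} a_{k₁,2k₂+1} (−1)^{k₂} β^{2k₂+1} ξ^{(k₁)}(x₁)`;
`L₂₁ = −L₁₂`. -/
noncomputable def L12 (r : ℕ) (a : ℕ → ℕ → ℝ) (β : ℝ) (ξ : ℝ → ℝ) (x₁ : ℝ) : ℝ :=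
  ∑ p ∈ (range (2 * r + 1) ×ˢ range (2 * r + 1)).filter
      (fun p => p.1 + 2 * p.2 + 1 ≤ 2 * r),
    a p.1 (2 * p.2 + 1) * (-1 : ℝ) ^ p.2 * β ^ (2 * p.2 + 1) * iteratedDeriv p.1 ξ x₁

/-- coefficient pair after `k` derivatives of `y ↦ c·cos(βy)+s·sin(βy)` -/
noncomputable def csPair (β c s : ℝ) : ℕ → ℝ × ℝ
  | 0 => (c, s)
  | k + 1 => (β * (csPair β c s k).2, -(β * (csPair β c s k).1))

lemma csPair_even (β c s : ℝ) (m : ℕ) :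
    csPair β c s (2 * m)
      = ((-1 : ℝ) ^ m * β ^ (2 * m) * c, (-1 : ℝ) ^ m * β ^ (2 * m) * s) := by
  induction m with
  | zero => simp [csPair]
  | succ m ih =>
    rw [show 2 * (m + 1) = (2 * m) + 1 + 1 by ring, csPair, csPair, ih]
    simp only [Prod.mk.injEq]
    constructor <;> ring

lemma csPair_odd (β c s : ℝ) (m : ℕ) :
    csPair β c s (2 * m + 1)
      = ((-1 : ℝ) ^ m * β ^ (2 * m + 1) * s, -((-1 : ℝ) ^ m * β ^ (2 * m + 1) * c)) := by
  rw [csPair, csPair_even]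
  simp only [Prod.mk.injEq]
  constructor <;> ring

lemma iter_trig (β : ℝ) (k : ℕ) (c s : ℝ) (x : ℝ) :
    iteratedDeriv k (fun y => c * Real.cos (β * y) + s * Real.sin (β * y)) x
      = (csPair β c s k).1 * Real.cos (β * x) + (csPair β c s k).2 * Real.sin (β * x) := by
  induction k generalizing x with
  | zero => simp [csPair]
  | succ k ih =>
    have hfun : iteratedDeriv k (fun y => c * Real.cos (β * y) + s * Real.sin (β * y))
        = fun x => (csPair β c s k).1 * Real.cos (β * x)
            + (csPair β c s k).2 * Real.sin (β * x) := funext ih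
    rw [iteratedDeriv_succ, hfun]
    have h1 : HasDerivAt (fun y : ℝ => Real.cos (β * y)) (-Real.sin (β * x) * β) x := by
      simpa [Function.comp_def] using (Real.hasDerivAt_cos (β * x)).comp x ((hasDerivAt_id x).const_mul β)
    have h2 : HasDerivAt (fun y : ℝ => Real.sin (β * y)) (Real.cos (β * x) * β) x := by
      simpa [Function.comp_def] using (Real.hasDerivAt_sin (β * x)).comp x ((hasDerivAt_id x).const_mul β)
    rw [(show HasDerivAt (fun x => (csPair β c s k).1 * Real.cos (β * x)
        + (csPair β c s k).2 * Real.sin (β * x)) _ x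
      from (h1.const_mul (csPair β c s k).1).add (h2.const_mul (csPair β c s k).2)).deriv]
    rw [csPair]
    ring

lemma iter_lin (k : ℕ) (C S : ℝ) (f g : ℝ → ℝ) (hf : ContDiff ℝ k f) (hg : ContDiff ℝ k g)
    (x : ℝ) :
    iteratedDeriv k (fun y => C * f y + S * g y) x
      = C * iteratedDeriv k f x + S * iteratedDeriv k g x := by
  simp only [← iteratedDerivWithin_univ]
  rw [show (fun y => C * f y + S * g y) = (fun y => C * f y) + (fun y => S * g y) from rfl,
    iteratedDerivWithin_add (Set.mem_univ x) uniqueDiffOn_univ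
      ((contDiff_const.mul hf).contDiffAt.contDiffWithinAt) ((contDiff_const.mul hg).contDiffAt.contDiffWithinAt),
    iteratedDerivWithin_const_mul (Set.mem_univ x) uniqueDiffOn_univ _ hf.contDiffAt.contDiffWithinAt,
    iteratedDerivWithin_const_mul (Set.mem_univ x) uniqueDiffOn_univ _ hg.contDiffAt.contDiffWithinAt]

lemma mixed_even (r : ℕ) (β : ℝ) (ξ₁ ξ₂ : ℝ → ℝ)
    (hξ₁ : ContDiff ℝ (2 * r : ℕ) ξ₁) (hξ₂ : ContDiff ℝ (2 * r : ℕ) ξ₂)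
    (k₁ m : ℕ) (hk₁ : k₁ ≤ 2 * r) (x₁ x₂ : ℝ) :
    mixedPartial k₁ (2 * m)
        (fun y₁ y₂ => ξ₁ y₁ * Real.cos (β * y₂) + ξ₂ y₁ * Real.sin (β * y₂)) x₁ x₂
      = (-1 : ℝ) ^ m * β ^ (2 * m) * (Real.cos (β * x₂) * iteratedDeriv k₁ ξ₁ x₁
          + Real.sin (β * x₂) * iteratedDeriv k₁ ξ₂ x₁) := by
  have hcast : (k₁ : WithTop ℕ∞) ≤ ((2 * r : ℕ) : WithTop ℕ∞) := by exact_mod_cast hk₁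
  simp only [mixedPartial]
  have hin : (fun y₁ => iteratedDeriv (2 * m)
        (fun y₂ => ξ₁ y₁ * Real.cos (β * y₂) + ξ₂ y₁ * Real.sin (β * y₂)) x₂)
      = fun y₁ => ((-1 : ℝ) ^ m * β ^ (2 * m) * Real.cos (β * x₂)) * ξ₁ y₁
          + ((-1 : ℝ) ^ m * β ^ (2 * m) * Real.sin (β * x₂)) * ξ₂ y₁ := by
    funext y₁
    rw [iter_trig, csPair_even]
    ring
  rw [hin, iter_lin k₁ _ _ ξ₁ ξ₂ (hξ₁.of_le hcast) (hξ₂.of_le hcast)]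
  ring

lemma mixed_odd (r : ℕ) (β : ℝ) (ξ₁ ξ₂ : ℝ → ℝ)
    (hξ₁ : ContDiff ℝ (2 * r : ℕ) ξ₁) (hξ₂ : ContDiff ℝ (2 * r : ℕ) ξ₂)
    (k₁ m : ℕ) (hk₁ : k₁ ≤ 2 * r) (x₁ x₂ : ℝ) :
    mixedPartial k₁ (2 * m + 1)
        (fun y₁ y₂ => ξ₁ y₁ * Real.cos (β * y₂) + ξ₂ y₁ * Real.sin (β * y₂)) x₁ x₂
      = (-1 : ℝ) ^ m * β ^ (2 * m + 1) * (Real.cos (β * x₂) * iteratedDeriv k₁ ξ₂ x₁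
          - Real.sin (β * x₂) * iteratedDeriv k₁ ξ₁ x₁) := by
  have hcast : (k₁ : WithTop ℕ∞) ≤ ((2 * r : ℕ) : WithTop ℕ∞) := by exact_mod_cast hk₁
  simp only [mixedPartial]
  have hin : (fun y₁ => iteratedDeriv (2 * m + 1)
        (fun y₂ => ξ₁ y₁ * Real.cos (β * y₂) + ξ₂ y₁ * Real.sin (β * y₂)) x₂)
      = fun y₁ => (-((-1 : ℝ) ^ m * β ^ (2 * m + 1) * Real.sin (β * x₂))) * ξ₁ y₁
          + ((-1 : ℝ) ^ m * β ^ (2 * m + 1) * Real.cos (β * x₂)) * ξ₂ y₁ := by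
    funext y₁
    rw [iter_trig, csPair_odd]
    ring
  rw [hin, iter_lin k₁ _ _ ξ₁ ξ₂ (hξ₁.of_le hcast) (hξ₂.of_le hcast)]
  ring

lemma Lop_eq (r : ℕ) (a : ℕ → ℕ → ℝ) (β : ℝ) (ξ₁ ξ₂ : ℝ → ℝ)
    (hξ₁ : ContDiff ℝ (2 * r : ℕ) ξ₁) (hξ₂ : ContDiff ℝ (2 * r : ℕ) ξ₂) (x₁ x₂ : ℝ) :
    Lop r a (fun y₁ y₂ => ξ₁ y₁ * Real.cos (β * y₂) + ξ₂ y₁ * Real.sin (β * y₂)) x₁ x₂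
      = (L11 r a β ξ₁ x₁ + L12 r a β ξ₂ x₁) * Real.cos (β * x₂)
        + (-(L12 r a β ξ₁ x₁) + L11 r a β ξ₂ x₁) * Real.sin (β * x₂) := by
  set φ : ℝ → ℝ → ℝ := fun y₁ y₂ => ξ₁ y₁ * Real.cos (β * y₂) + ξ₂ y₁ * Real.sin (β * y₂)
    with hφ
  set Sf := (range (2 * r + 1) ×ˢ range (2 * r + 1)).filter (fun p => p.1 + p.2 ≤ 2 * r)
    with hSf
  have heven : ∑ p ∈ Sf.filter (fun p => Even p.2), a p.1 p.2 * mixedPartial p.1 p.2 φ x₁ x₂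
      = L11 r a β ξ₁ x₁ * Real.cos (β * x₂) + L11 r a β ξ₂ x₁ * Real.sin (β * x₂) := by
    rw [L11, L11, Finset.sum_mul, Finset.sum_mul, ← Finset.sum_add_distrib]
    refine Finset.sum_nbij' (fun p => (p.1, p.2 / 2)) (fun q => (q.1, 2 * q.2)) ?_ ?_ ?_ ?_ ?_
    · intro p hp
      simp only [hSf, Finset.mem_filter, Finset.mem_product, Finset.mem_range,
        Nat.even_iff] at hp ⊢
      omega
    · intro q hq
      simp only [hSf, Finset.mem_filter, Finset.mem_product, Finset.mem_range,
        Nat.even_iff] at hq ⊢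
      omega
    · intro p hp
      simp only [hSf, Finset.mem_filter, Finset.mem_product, Finset.mem_range,
        Nat.even_iff] at hp
      dsimp only
      rw [Prod.mk.injEq]
      exact ⟨rfl, by omega⟩
    · intro q hq
      dsimp only
      rw [Prod.mk.injEq]
      exact ⟨rfl, by omega⟩
    · intro p hp
      obtain ⟨k₁, k₂⟩ := p
      simp only [hSf, Finset.mem_filter, Finset.mem_product, Finset.mem_range,
        Nat.even_iff] at hp
      obtain ⟨m, rfl⟩ : ∃ m, k₂ = 2 * m := ⟨k₂ / 2, by omega⟩
      have h2m : 2 * m / 2 = m := by omega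
      simp only [h2m]
      rw [mixed_even r β ξ₁ ξ₂ hξ₁ hξ₂ k₁ m (by omega) x₁ x₂]
      ring
  have hodd : ∑ p ∈ Sf.filter (fun p => ¬ Even p.2),
        a p.1 p.2 * mixedPartial p.1 p.2 φ x₁ x₂
      = L12 r a β ξ₂ x₁ * Real.cos (β * x₂) - L12 r a β ξ₁ x₁ * Real.sin (β * x₂) := by
    rw [L12, L12, Finset.sum_mul, Finset.sum_mul, ← Finset.sum_sub_distrib]
    refine Finset.sum_nbij' (fun p => (p.1, p.2 / 2)) (fun q => (q.1, 2 * q.2 + 1)) ?_ ?_ ?_ ?_ ?_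
    · intro p hp
      simp only [hSf, Finset.mem_filter, Finset.mem_product, Finset.mem_range,
        Nat.even_iff] at hp ⊢
      omega
    · intro q hq
      simp only [hSf, Finset.mem_filter, Finset.mem_product, Finset.mem_range,
        Nat.even_iff] at hq ⊢
      omega
    · intro p hp
      simp only [hSf, Finset.mem_filter, Finset.mem_product, Finset.mem_range,
        Nat.even_iff] at hp
      dsimp only
      rw [Prod.mk.injEq]
      exact ⟨rfl, by omega⟩
    · intro q hq
      dsimp only
      rw [Prod.mk.injEq]
      exact ⟨rfl, by omega⟩
    · intro p hp
      obtain ⟨k₁, k₂⟩ := p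
      simp only [hSf, Finset.mem_filter, Finset.mem_product, Finset.mem_range,
        Nat.even_iff] at hp
      obtain ⟨m, rfl⟩ : ∃ m, k₂ = 2 * m + 1 := ⟨k₂ / 2, by omega⟩
      have h2m : (2 * m + 1) / 2 = m := by omega
      simp only [h2m]
      rw [mixed_odd r β ξ₁ ξ₂ hξ₁ hξ₂ k₁ m (by omega) x₁ x₂]
      ring
  calc Lop r a φ x₁ x₂
      = (∑ p ∈ Sf.filter (fun p => Even p.2), a p.1 p.2 * mixedPartial p.1 p.2 φ x₁ x₂)
        + ∑ p ∈ Sf.filter (fun p => ¬ Even p.2), a p.1 p.2 * mixedPartial p.1 p.2 φ x₁ x₂ :=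
        (Finset.sum_filter_add_sum_filter_not Sf _ _).symm
    _ = _ := by rw [heven, hodd]; ring

/-- for `β ≠ 0`, `L φ = 0` identically for
`φ(x₁,x₂) = ξ₁(x₁) cos(β x₂) + ξ₂(x₁) sin(β x₂)` if and only if the coupled ordinary
differential system `L₁₁ξ₁ + L₁₂ξ₂ = 0`, `L₂₁ξ₁ + L₂₂ξ₂ = 0` (with `L₂₁ = −L₁₂`,
`L₂₂ = L₁₁`) holds identically. -/
theorem stmt_10 (r : ℕ) (hr : 0 < r) (a : ℕ → ℕ → ℝ) (β : ℝ) (hβ : β ≠ 0)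
    (ξ₁ ξ₂ : ℝ → ℝ)
    (hξ₁ : ContDiff ℝ (2 * r : ℕ) ξ₁) (hξ₂ : ContDiff ℝ (2 * r : ℕ) ξ₂) :
    (∀ x₁ x₂ : ℝ,
      Lop r a (fun y₁ y₂ => ξ₁ y₁ * Real.cos (β * y₂) + ξ₂ y₁ * Real.sin (β * y₂)) x₁ x₂
        = 0)
    ↔ (∀ x₁ : ℝ,
        L11 r a β ξ₁ x₁ + L12 r a β ξ₂ x₁ = 0 ∧
        -(L12 r a β ξ₁ x₁) + L11 r a β ξ₂ x₁ = 0) := by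
  constructor
  · intro h x₁
    have key : ∀ x₂ : ℝ,
        (L11 r a β ξ₁ x₁ + L12 r a β ξ₂ x₁) * Real.cos (β * x₂)
          + (-(L12 r a β ξ₁ x₁) + L11 r a β ξ₂ x₁) * Real.sin (β * x₂) = 0 := by
      intro x₂
      rw [← Lop_eq r a β ξ₁ ξ₂ hξ₁ hξ₂ x₁ x₂]
      exact h x₁ x₂
    have hA := key 0
    have hB := key (Real.pi / (2 * β))
    rw [show β * (Real.pi / (2 * β)) = Real.pi / 2 by field_simp] at hB
    simp only [mul_zero, Real.cos_zero, Real.sin_zero, mul_one, add_zero] at hA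
    simp only [Real.cos_pi_div_two, Real.sin_pi_div_two, mul_zero, mul_one, zero_add] at hB
    exact ⟨hA, hB⟩
  · intro h x₁ x₂
    rw [Lop_eq r a β ξ₁ ξ₂ hξ₁ hξ₂ x₁ x₂]
    obtain ⟨h1, h2⟩ := h x₁
    rw [h1, h2]
    ring
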